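/- Let Z be a standard Gaussian and ε ~ Uniform[−1/2,1/2] independent of Z. Then the function ρ(s) = h(√s·Z + ε), where h denotes differential entropy, is strictly concave on (0, ∞). -/

import Mathlib

open MeasureTheory ProbabilityTheory

/-- The density of `√s·Z + ε` where `Z` is standard Gaussian and `ε ~ Uniform[−1/2,1/2]` is
independent of `Z`: the convolution of the `N(0, s)` density with the uniform density. -/
noncomputable def ditherGaussDensity (s : ℝ) (x : ℝ) : ℝ :=
  ∫ u in Set.Icc (-(1 / 2) : ℝ) (1 / 2), gaussianPDFReal 0 (Real.toNNReal s) (x - u)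

/-- The differential entropy `h(√s·Z + ε) = −∫ p log p`. -/
noncomputable def ditherGaussEntropy (s : ℝ) : ℝ :=
  -∫ x : ℝ, ditherGaussDensity s x * Real.log (ditherGaussDensity s x)

open MeasureTheory ProbabilityTheory Real Set Filter Topology

namespace Dither

/-- Gaussian density with variance `s`. -/
noncomputable def g (s x : ℝ) : ℝ := (Real.sqrt (2*π*s))⁻¹ * Real.exp (-x^2/(2*s))

noncomputable def g1 (s x : ℝ) : ℝ := -(x/s) * g s x
noncomputable def g2 (s x : ℝ) : ℝ := ((x^2 - s)/s^2) * g s x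
noncomputable def g3 (s x : ℝ) : ℝ := ((3*s*x - x^3)/s^3) * g s x

/-- standard normal pdf -/
noncomputable def phi (x : ℝ) : ℝ := (Real.sqrt (2*π))⁻¹ * Real.exp (-x^2/2)

/-- standard normal "CDF from 0" -/
noncomputable def Q (y : ℝ) : ℝ := ∫ t in (0:ℝ)..y, phi t

lemma g_pos {s : ℝ} (hs : 0 < s) (x : ℝ) : 0 < g s x := by
  have h : 0 < Real.sqrt (2*π*s) := Real.sqrt_pos.2 (by positivity)
  exact mul_pos (inv_pos.2 h) (Real.exp_pos _)

lemma phi_pos (x : ℝ) : 0 < phi x := by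
  have h : 0 < Real.sqrt (2*π) := Real.sqrt_pos.2 (by positivity)
  exact mul_pos (inv_pos.2 h) (Real.exp_pos _)

lemma continuous_phi : Continuous phi := by
  unfold phi; fun_prop

lemma continuous_g (s : ℝ) : Continuous (g s) := by
  unfold g; fun_prop

lemma continuous_g1 (s : ℝ) : Continuous (g1 s) := by
  unfold g1; exact (continuous_id.div_const s).neg.mul (continuous_g s)

lemma continuous_g2 (s : ℝ) : Continuous (g2 s) := by
  unfold g2
  exact (((continuous_pow 2).sub continuous_const).div_const _).mul (continuous_g s)

lemma continuous_g3 (s : ℝ) : Continuous (g3 s) := by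
  unfold g3
  exact (((continuous_const.mul continuous_id).sub (continuous_pow 3)).div_const _).mul
    (continuous_g s)

lemma g_scaling {s : ℝ} (hs : 0 < s) (x : ℝ) :
    g s x = (Real.sqrt s)⁻¹ * phi (x / Real.sqrt s) := by
  have hss : Real.sqrt s ≠ 0 := ne_of_gt (Real.sqrt_pos.2 hs)
  have h1 : Real.sqrt (2*π*s) = Real.sqrt (2*π) * Real.sqrt s := by
    rw [Real.sqrt_mul (by positivity)]
  have h2 : (x / Real.sqrt s)^2 / 2 = x^2/(2*s) := by
    rw [div_pow, Real.sq_sqrt hs.le]; ring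
  have h3 : Real.exp (-(x / Real.sqrt s)^2/2) = Real.exp (-x^2/(2*s)) := by
    rw [neg_div, neg_div, h2]
  rw [g, phi, h1, mul_inv, ← h3]
  ring

lemma hasDerivAt_g_x {s : ℝ} (hs : 0 < s) (x : ℝ) :
    HasDerivAt (fun x => g s x) (g1 s x) x := by
  have h : HasDerivAt (fun x : ℝ => -x^2/(2*s)) (-(x/s)) x := by
    have := ((hasDerivAt_pow 2 x).neg).div_const (2*s)
    refine this.congr_deriv ?_
    field_simp; ring
  have := (h.exp.const_mul ((Real.sqrt (2*π*s))⁻¹))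
  refine this.congr_deriv ?_
  unfold g1 g; ring

lemma hasDerivAt_g1_x {s : ℝ} (hs : 0 < s) (x : ℝ) :
    HasDerivAt (fun x => g1 s x) (g2 s x) x := by
  have h1 : HasDerivAt (fun x : ℝ => -(x/s)) (-(1/s)) x := by
    exact ((hasDerivAt_id x).div_const s).neg
  have h2 := (h1.mul (hasDerivAt_g_x hs x))
  refine h2.congr_deriv ?_
  simp only [g2, g1, g]
  field_simp
  ring

lemma hasDerivAt_g2_x {s : ℝ} (hs : 0 < s) (x : ℝ) :
    HasDerivAt (fun x => g2 s x) (g3 s x) x := by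
  have h1 : HasDerivAt (fun x : ℝ => (x^2 - s)/s^2) (2*x/s^2) x := by
    simpa using (((hasDerivAt_pow 2 x).sub_const s).div_const (s^2))
  have h2 := (h1.mul (hasDerivAt_g_x hs x))
  refine h2.congr_deriv ?_
  simp only [g3, g2, g1, g]
  field_simp
  ring

lemma hasDerivAt_g_s {y : ℝ} {s : ℝ} (hs : 0 < s) :
    HasDerivAt (fun s => g s y) ((2:ℝ)⁻¹ * g2 s y) s := by
  have hsq : Real.sqrt s ≠ 0 := ne_of_gt (Real.sqrt_pos.2 hs)
  have h2pis : (0:ℝ) < 2*π*s := by positivity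
  -- derivative of s ↦ (√(2πs))⁻¹
  have hA : HasDerivAt (fun s : ℝ => (Real.sqrt (2*π*s))⁻¹)
      (-(2*π) / (2 * (2*π*s) * Real.sqrt (2*π*s))) s := by
    have h1 : HasDerivAt (fun s : ℝ => 2*π*s) (2*π) s := by
      simpa using (hasDerivAt_id s).const_mul (2*π)
    have h2 : HasDerivAt Real.sqrt (1 / (2 * Real.sqrt (2*π*s))) (2*π*s) :=
      Real.hasDerivAt_sqrt (ne_of_gt h2pis)
    have h3 := (h2.comp s h1)
    have h4 := h3.inv (ne_of_gt (Real.sqrt_pos.2 h2pis))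
    simp only [Function.comp] at h4
    refine h4.congr_deriv ?_
    rw [Real.sq_sqrt h2pis.le]
    field_simp
  -- derivative of s ↦ exp (-y^2/(2s))
  have hB : HasDerivAt (fun s : ℝ => Real.exp (-y^2/(2*s)))
      (y^2/(2*s^2) * Real.exp (-y^2/(2*s))) s := by
    have h1 : HasDerivAt (fun s : ℝ => -y^2/(2*s)) (y^2/(2*s^2)) s := by
      have h0 : HasDerivAt (fun s : ℝ => 2*s) 2 s := by
        simpa using (hasDerivAt_id s).const_mul (2:ℝ)
      have h := (h0.inv (by positivity)).const_mul (-y^2)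
      have heq : (fun s : ℝ => -y^2 * (2*s)⁻¹) = fun s : ℝ => -y^2/(2*s) := by
        funext t; rw [div_eq_mul_inv]
      rw [← heq]
      refine h.congr_deriv ?_
      field_simp
    simpa [mul_comm] using h1.exp
  have h := hA.mul hB
  refine h.congr_deriv ?_
  unfold g2 g
  have hs1 : Real.sqrt (2*π*s) > 0 := Real.sqrt_pos.2 h2pis
  have hsq2 : Real.sqrt (2*π*s) ^ 2 = 2*π*s := Real.sq_sqrt h2pis.le
  field_simp
  nlinarith [Real.exp_pos (-y^2/(2*s)), hsq2, hs1, sq_nonneg (Real.sqrt (2*π*s)),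
    mul_pos hs1 hs]

/-! ### The density `P` and its derivatives -/

noncomputable def P (s x : ℝ) : ℝ := Q ((x + 2⁻¹)/Real.sqrt s) - Q ((x - 2⁻¹)/Real.sqrt s)
noncomputable def P1 (s x : ℝ) : ℝ := g s (x + 2⁻¹) - g s (x - 2⁻¹)
noncomputable def P2 (s x : ℝ) : ℝ := g1 s (x + 2⁻¹) - g1 s (x - 2⁻¹)
noncomputable def P3 (s x : ℝ) : ℝ := g2 s (x + 2⁻¹) - g2 s (x - 2⁻¹)

lemma hasDerivAt_Q (y : ℝ) : HasDerivAt Q (phi y) y := by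
  refine intervalIntegral.integral_hasDerivAt_right
    (continuous_phi.intervalIntegrable _ _) ?_ continuous_phi.continuousAt
  exact continuous_phi.stronglyMeasurableAtFilter _ _

lemma intervalIntegral_phi (α β : ℝ) : ∫ t in α..β, phi t = Q β - Q α := by
  rw [Q, Q, ← intervalIntegral.integral_interval_sub_left
    (continuous_phi.intervalIntegrable _ _) (continuous_phi.intervalIntegrable _ _)]

lemma P_eq_integral {s : ℝ} (hs : 0 < s) (x : ℝ) :
    P s x = ∫ v in (x - 2⁻¹)..(x + 2⁻¹), g s v := by
  have hss : (0:ℝ) < Real.sqrt s := Real.sqrt_pos.2 hs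
  have h1 : ∀ v, g s v = (Real.sqrt s)⁻¹ * phi (v / Real.sqrt s) := fun v => g_scaling hs v
  simp_rw [h1]
  rw [intervalIntegral.integral_const_mul, intervalIntegral.integral_comp_div _ (ne_of_gt hss),
    intervalIntegral_phi, P, smul_eq_mul]
  field_simp

lemma P1_eq_integral {s : ℝ} (hs : 0 < s) (x : ℝ) :
    P1 s x = ∫ v in (x - 2⁻¹)..(x + 2⁻¹), g1 s v := by
  rw [intervalIntegral.integral_eq_sub_of_hasDerivAt
    (fun v _ => hasDerivAt_g_x hs v) ((continuous_g1 s).intervalIntegrable _ _), P1]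

lemma P2_eq_integral {s : ℝ} (hs : 0 < s) (x : ℝ) :
    P2 s x = ∫ v in (x - 2⁻¹)..(x + 2⁻¹), g2 s v := by
  rw [intervalIntegral.integral_eq_sub_of_hasDerivAt
    (fun v _ => hasDerivAt_g1_x hs v) ((continuous_g2 s).intervalIntegrable _ _), P2]

lemma P3_eq_integral {s : ℝ} (hs : 0 < s) (x : ℝ) :
    P3 s x = ∫ v in (x - 2⁻¹)..(x + 2⁻¹), g3 s v := by
  rw [intervalIntegral.integral_eq_sub_of_hasDerivAt
    (fun v _ => hasDerivAt_g2_x hs v) ((continuous_g3 s).intervalIntegrable _ _), P3]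

lemma hasDerivAt_P_x {s : ℝ} (hs : 0 < s) (x : ℝ) :
    HasDerivAt (fun x => P s x) (P1 s x) x := by
  have hss : (0:ℝ) < Real.sqrt s := Real.sqrt_pos.2 hs
  have h1 : HasDerivAt (fun x : ℝ => (x + 2⁻¹)/Real.sqrt s) ((Real.sqrt s)⁻¹) x := by
    simpa using ((hasDerivAt_id x).add_const (2⁻¹:ℝ)).div_const (Real.sqrt s)
  have h2 : HasDerivAt (fun x : ℝ => (x - 2⁻¹)/Real.sqrt s) ((Real.sqrt s)⁻¹) x := by
    simpa using ((hasDerivAt_id x).sub_const (2⁻¹:ℝ)).div_const (Real.sqrt s)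
  have hQ1 := (hasDerivAt_Q ((x + 2⁻¹)/Real.sqrt s)).comp x h1
  have hQ2 := (hasDerivAt_Q ((x - 2⁻¹)/Real.sqrt s)).comp x h2
  have := hQ1.sub hQ2
  refine this.congr_deriv ?_
  rw [P1, g_scaling hs, g_scaling hs]
  ring

lemma hasDerivAt_P1_x {s : ℝ} (hs : 0 < s) (x : ℝ) :
    HasDerivAt (fun x => P1 s x) (P2 s x) x := by
  have h1 : HasDerivAt (fun x : ℝ => g s (x + 2⁻¹)) (g1 s (x + 2⁻¹)) x := by
    refine ((hasDerivAt_g_x hs (x + 2⁻¹)).comp x ((hasDerivAt_id x).add_const (2⁻¹:ℝ))).congr_deriv ?_; simp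
  have h2 : HasDerivAt (fun x : ℝ => g s (x - 2⁻¹)) (g1 s (x - 2⁻¹)) x := by
    refine ((hasDerivAt_g_x hs (x - 2⁻¹)).comp x ((hasDerivAt_id x).sub_const (2⁻¹:ℝ))).congr_deriv ?_; simp
  exact h1.sub h2

lemma hasDerivAt_P2_x {s : ℝ} (hs : 0 < s) (x : ℝ) :
    HasDerivAt (fun x => P2 s x) (P3 s x) x := by
  have h1 : HasDerivAt (fun x : ℝ => g1 s (x + 2⁻¹)) (g2 s (x + 2⁻¹)) x := by
    refine ((hasDerivAt_g1_x hs (x + 2⁻¹)).comp x ((hasDerivAt_id x).add_const (2⁻¹:ℝ))).congr_deriv ?_; simp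
  have h2 : HasDerivAt (fun x : ℝ => g1 s (x - 2⁻¹)) (g2 s (x - 2⁻¹)) x := by
    refine ((hasDerivAt_g1_x hs (x - 2⁻¹)).comp x ((hasDerivAt_id x).sub_const (2⁻¹:ℝ))).congr_deriv ?_; simp
  exact h1.sub h2

lemma hasDerivAt_Qcomp_s {s : ℝ} (hs : 0 < s) (y : ℝ) :
    HasDerivAt (fun s => Q (y / Real.sqrt s)) (2⁻¹ * g1 s y) s := by
  have hss : (0:ℝ) < Real.sqrt s := Real.sqrt_pos.2 hs
  have h1 : HasDerivAt (fun s : ℝ => y / Real.sqrt s)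
      (-y / (2 * s * Real.sqrt s)) s := by
    have h2 : HasDerivAt Real.sqrt (1 / (2 * Real.sqrt s)) s := Real.hasDerivAt_sqrt (ne_of_gt hs)
    have h3 := (h2.inv (ne_of_gt hss)).const_mul y
    have heq : (fun s : ℝ => y * (Real.sqrt s)⁻¹) = fun s : ℝ => y / Real.sqrt s := by
      funext t; rw [div_eq_mul_inv]
    rw [← heq]
    refine h3.congr_deriv ?_
    rw [Real.sq_sqrt hs.le]
    ring
  have h4 := (hasDerivAt_Q (y / Real.sqrt s)).comp s h1
  refine h4.congr_deriv ?_
  rw [g1, g_scaling hs]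
  have h5 : Real.sqrt s * Real.sqrt s = s := Real.mul_self_sqrt hs.le
  field_simp

lemma hasDerivAt_P_s {s : ℝ} (hs : 0 < s) (x : ℝ) :
    HasDerivAt (fun s => P s x) (2⁻¹ * P2 s x) s := by
  have h := (hasDerivAt_Qcomp_s hs (x + 2⁻¹)).sub (hasDerivAt_Qcomp_s hs (x - 2⁻¹))
  refine h.congr_deriv ?_
  rw [P2]; ring

lemma hasDerivAt_P1_s {s : ℝ} (hs : 0 < s) (x : ℝ) :
    HasDerivAt (fun s => P1 s x) (2⁻¹ * P3 s x) s := by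
  have h := (hasDerivAt_g_s (y := x + 2⁻¹) hs).sub (hasDerivAt_g_s (y := x - 2⁻¹) hs)
  refine h.congr_deriv ?_
  rw [P3]
  ring

lemma continuous_P_x {s : ℝ} (hs : 0 < s) : Continuous (fun x => P s x) :=
  continuous_iff_continuousAt.2 fun x => (hasDerivAt_P_x hs x).continuousAt

lemma continuous_P1_x {s : ℝ} (hs : 0 < s) : Continuous (fun x => P1 s x) :=
  (continuous_g s).comp (continuous_id.add continuous_const) |>.sub
    ((continuous_g s).comp (continuous_id.sub continuous_const))

lemma continuous_P2_x {s : ℝ} (hs : 0 < s) : Continuous (fun x => P2 s x) :=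
  (continuous_g1 s).comp (continuous_id.add continuous_const) |>.sub
    ((continuous_g1 s).comp (continuous_id.sub continuous_const))

lemma continuous_P3_x {s : ℝ} (hs : 0 < s) : Continuous (fun x => P3 s x) :=
  (continuous_g2 s).comp (continuous_id.add continuous_const) |>.sub
    ((continuous_g2 s).comp (continuous_id.sub continuous_const))

/-! ### Bounds -/

lemma interval_abs_le {x v : ℝ} (hv : v ∈ Set.Icc (x - 2⁻¹) (x + 2⁻¹)) : |v| ≤ |x| + 2⁻¹ := by
  rw [abs_le]
  constructor
  · have := hv.1; have := neg_abs_le x; linarith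
  · have := hv.2; have := le_abs_self x; linarith

/-- Key "ratio" bound: an integral over the window is controlled by `M * P`. -/
lemma ratio_bound {s x M : ℝ} (hs : 0 < s) (h : ℝ → ℝ) (hc : Continuous h)
    (hb : ∀ v ∈ Set.Icc (x - 2⁻¹) (x + 2⁻¹), |h v| ≤ M * g s v) :
    |∫ v in (x - 2⁻¹)..(x + 2⁻¹), h v| ≤ M * P s x := by
  have hle : x - 2⁻¹ ≤ x + 2⁻¹ := by linarith
  have h1 : |∫ v in (x - 2⁻¹)..(x + 2⁻¹), h v| ≤ ∫ v in (x - 2⁻¹)..(x + 2⁻¹), |h v| :=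
    intervalIntegral.abs_integral_le_integral_abs hle
  have h2 : (∫ v in (x - 2⁻¹)..(x + 2⁻¹), |h v|) ≤ ∫ v in (x - 2⁻¹)..(x + 2⁻¹), M * g s v := by
    refine intervalIntegral.integral_mono_on hle (hc.abs.intervalIntegrable _ _)
      ((continuous_const.mul (continuous_g s)).intervalIntegrable _ _) hb
  rw [intervalIntegral.integral_const_mul] at h2
  rw [P_eq_integral hs]
  linarith

lemma P_pos {s : ℝ} (hs : 0 < s) (x : ℝ) : 0 < P s x := by
  rw [P_eq_integral hs]
  exact intervalIntegral.intervalIntegral_pos_of_pos_on ((continuous_g s).intervalIntegrable _ _)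
    (fun v _ => g_pos hs v) (by linarith)

lemma integral_g {s : ℝ} (hs : 0 < s) : ∫ x : ℝ, g s x = 1 := by
  have h1 : ∀ x : ℝ, g s x = (Real.sqrt (2*π*s))⁻¹ * Real.exp (-(2*s)⁻¹ * x^2) := by
    intro x; rw [g]; congr 1; rw [neg_div, neg_mul]; congr 1; rw [inv_mul_eq_div]
  simp_rw [h1]
  rw [MeasureTheory.integral_const_mul, integral_gaussian]
  have h2 : π / (2*s)⁻¹ = 2*π*s := by field_simp
  rw [h2]
  have h3 : (0:ℝ) < Real.sqrt (2*π*s) := Real.sqrt_pos.2 (by positivity)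
  field_simp

lemma integrable_g {s : ℝ} (hs : 0 < s) : Integrable (g s) := by
  have h1 : ∀ x : ℝ, g s x = (Real.sqrt (2*π*s))⁻¹ * Real.exp (-(2*s)⁻¹ * x^2) := by
    intro x; rw [g]; congr 1; rw [neg_div, neg_mul]; congr 1; rw [inv_mul_eq_div]
  rw [show g s = fun x => (Real.sqrt (2*π*s))⁻¹ * Real.exp (-(2*s)⁻¹ * x^2) from funext h1]
  exact (integrable_exp_neg_mul_sq (by positivity)).const_mul _

lemma P_le_one {s : ℝ} (hs : 0 < s) (x : ℝ) : P s x ≤ 1 := by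
  rw [P_eq_integral hs, intervalIntegral.integral_of_le (by linarith : x - 2⁻¹ ≤ x + 2⁻¹)]
  calc ∫ v in Set.Ioc (x - 2⁻¹) (x + 2⁻¹), g s v
      ≤ ∫ v : ℝ, g s v := setIntegral_le_integral (integrable_g hs)
        (ae_of_all _ fun v => (g_pos hs v).le)
    _ = 1 := integral_g hs

lemma P_lower {s : ℝ} (hs : 0 < s) (x : ℝ) : g s (|x| + 2⁻¹) ≤ P s x := by
  rw [P_eq_integral hs]
  have h : ∀ v ∈ Set.Icc (x - 2⁻¹) (x + 2⁻¹), g s (|x| + 2⁻¹) ≤ g s v := by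
    intro v hv
    have h1 : v^2 ≤ (|x| + 2⁻¹)^2 := by
      have := interval_abs_le hv
      have h2 : |v|^2 ≤ (|x| + 2⁻¹)^2 := by
        apply pow_le_pow_left₀ (abs_nonneg v) this
      rwa [sq_abs] at h2
    rw [g, g]
    apply mul_le_mul_of_nonneg_left _ (by positivity)
    apply Real.exp_le_exp.2
    rw [neg_div, neg_div, neg_le_neg_iff]
    gcongr
  calc g s (|x| + 2⁻¹) = ((x + 2⁻¹) - (x - 2⁻¹)) • g s (|x| + 2⁻¹) := by
        norm_num
    _ = ∫ _ in (x - 2⁻¹)..(x + 2⁻¹), g s (|x| + 2⁻¹) := (intervalIntegral.integral_const _).symm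
    _ ≤ ∫ v in (x - 2⁻¹)..(x + 2⁻¹), g s v := by
        refine intervalIntegral.integral_mono_on (by linarith)
          (intervalIntegrable_const) ((continuous_g s).intervalIntegrable _ _) h

lemma aux_m_le (x : ℝ) : |x| + 2⁻¹ ≤ 1 + x^2 := by
  nlinarith [sq_nonneg (|x| - 1), sq_abs x, abs_nonneg x]

lemma aux_m_sq_le (x : ℝ) : (|x| + 2⁻¹)^2 ≤ 2*(1 + x^2) := by
  nlinarith [sq_nonneg (|x| - 1), sq_abs x, abs_nonneg x]

lemma aux_m_cube_le (x : ℝ) : (|x| + 2⁻¹)^3 ≤ 2*(1 + x^2)^2 := by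
  have h1 := aux_m_le x
  have h2 := aux_m_sq_le x
  have h3 : (0:ℝ) ≤ |x| + 2⁻¹ := by positivity
  have h4 : (0:ℝ) ≤ 1 + x^2 := by positivity
  calc (|x| + 2⁻¹)^3 = (|x| + 2⁻¹) * (|x| + 2⁻¹)^2 := by ring
    _ ≤ (1 + x^2) * (2*(1+x^2)) := by
        apply mul_le_mul h1 h2 (by positivity) h4
    _ = 2*(1 + x^2)^2 := by ring

section UniformBounds

variable {lo hi s x : ℝ}

lemma P1_bound (hlo : 0 < lo) (hs1 : lo ≤ s) (hs2 : s ≤ hi) (x : ℝ) :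
    |P1 s x| ≤ lo⁻¹ * (1+x^2) * P s x := by
  have hs : 0 < s := lt_of_lt_of_le hlo hs1
  rw [P1_eq_integral hs]
  apply ratio_bound hs _ (continuous_g1 s)
  intro v hv
  have hg := g_pos hs v
  have h1 : |g1 s v| = |v|/s * g s v := by
    rw [g1, abs_mul, abs_neg, abs_div, abs_of_pos hs, abs_of_pos hg]
  rw [h1]
  apply mul_le_mul_of_nonneg_right _ hg.le
  have h2 : |v| ≤ 1 + x^2 := le_trans (interval_abs_le hv) (aux_m_le x)
  rw [div_le_iff₀ hs, inv_mul_eq_div, div_mul_eq_mul_div, le_div_iff₀ hlo]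
  nlinarith [abs_nonneg v]

lemma P2_bound (hlo : 0 < lo) (hs1 : lo ≤ s) (hs2 : s ≤ hi) (x : ℝ) :
    |P2 s x| ≤ (2+hi)/lo^2 * (1+x^2) * P s x := by
  have hs : 0 < s := lt_of_lt_of_le hlo hs1
  rw [P2_eq_integral hs]
  apply ratio_bound hs _ (continuous_g2 s)
  intro v hv
  have hg := g_pos hs v
  have h1 : |g2 s v| = |v^2 - s|/s^2 * g s v := by
    rw [g2, abs_mul, abs_div, abs_of_pos (by positivity : (0:ℝ) < s^2), abs_of_pos hg]
  rw [h1]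
  apply mul_le_mul_of_nonneg_right _ hg.le
  have h2 : |v^2 - s| ≤ v^2 + s := by
    rw [abs_sub_le_iff]; constructor <;> nlinarith [sq_nonneg v]
  have h3 : v^2 ≤ 2*(1+x^2) := by
    have h4 : |v|^2 ≤ (|x| + 2⁻¹)^2 := by
      apply pow_le_pow_left₀ (abs_nonneg v) (interval_abs_le hv)
    rw [sq_abs] at h4
    exact le_trans h4 (aux_m_sq_le x)
  have h5 : (0:ℝ) < lo^2 := by positivity
  have h6 : lo^2 ≤ s^2 := pow_le_pow_left₀ hlo.le hs1 2
  have hhi : 0 < hi := lt_of_lt_of_le hlo (le_trans hs1 hs2)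
  have h10 : |v^2 - s| ≤ (2+hi)*(1+x^2) := by nlinarith [sq_nonneg x]
  calc |v^2 - s|/s^2 ≤ ((2+hi)*(1+x^2))/lo^2 := by
        rw [div_le_div_iff₀ (pow_pos hs 2) h5]
        calc |v^2 - s| * lo^2 ≤ ((2+hi)*(1+x^2)) * lo^2 :=
              mul_le_mul_of_nonneg_right h10 h5.le
          _ ≤ ((2+hi)*(1+x^2)) * s^2 := by
              apply mul_le_mul_of_nonneg_left h6 (by positivity)
    _ = (2+hi)/lo^2 * (1+x^2) := by ring

lemma P3_bound (hlo : 0 < lo) (hs1 : lo ≤ s) (hs2 : s ≤ hi) (x : ℝ) :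
    |P3 s x| ≤ (3*hi+2)/lo^3 * (1+x^2)^2 * P s x := by
  have hs : 0 < s := lt_of_lt_of_le hlo hs1
  rw [P3_eq_integral hs]
  apply ratio_bound hs _ (continuous_g3 s)
  intro v hv
  have hg := g_pos hs v
  have h1 : |g3 s v| = |3*s*v - v^3|/s^3 * g s v := by
    rw [g3, abs_mul, abs_div, abs_of_pos (by positivity : (0:ℝ) < s^3), abs_of_pos hg]
  rw [h1]
  apply mul_le_mul_of_nonneg_right _ hg.le
  have hv1 : |v| ≤ |x| + 2⁻¹ := interval_abs_le hv
  have h2 : |3*s*v - v^3| ≤ 3*s*|v| + |v|^3 := by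
    calc |3*s*v - v^3| ≤ |3*s*v| + |v^3| := abs_sub _ _
      _ = 3*s*|v| + |v|^3 := by
          rw [abs_mul, abs_mul, abs_pow, abs_of_pos hs]
          norm_num
  have h3 : 3*s*|v| + |v|^3 ≤ 3*hi*(1+x^2) + 2*(1+x^2)^2 := by
    have h4 : |v|^3 ≤ (|x| + 2⁻¹)^3 := by
      apply pow_le_pow_left₀ (abs_nonneg v) hv1
    have h5 := aux_m_cube_le x
    have h6 : 3*s*|v| ≤ 3*hi*(1+x^2) := by
      have := le_trans hv1 (aux_m_le x)
      nlinarith [abs_nonneg v]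
    linarith
  have h7 : (0:ℝ) < lo^3 := by positivity
  have h8 : lo^3 ≤ s^3 := pow_le_pow_left₀ hlo.le hs1 3
  have h9 : 3*hi*(1+x^2) + 2*(1+x^2)^2 ≤ (3*hi+2)*(1+x^2)^2 := by
    have hhi : 0 < hi := lt_of_lt_of_le hlo (le_trans hs1 hs2)
    have h10 : (1:ℝ)+x^2 ≤ (1+x^2)^2 := by nlinarith [sq_nonneg x, sq_nonneg (x^2)]
    have h11 := mul_le_mul_of_nonneg_left h10 (by positivity : (0:ℝ) ≤ 3*hi)
    linarith
  have hhi0 : 0 < hi := lt_of_lt_of_le hlo (le_trans hs1 hs2)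
  calc |3*s*v - v^3|/s^3 ≤ ((3*hi+2)*(1+x^2)^2)/lo^3 := by
        rw [div_le_div_iff₀ (pow_pos hs 3) h7]
        calc |3*s*v - v^3| * lo^3 ≤ ((3*hi+2)*(1+x^2)^2) * lo^3 := by
              apply mul_le_mul_of_nonneg_right (le_trans (le_trans h2 h3) h9) h7.le
          _ ≤ ((3*hi+2)*(1+x^2)^2) * s^3 := by
              apply mul_le_mul_of_nonneg_left h8
                (mul_nonneg (by linarith : (0:ℝ) ≤ 3*hi+2) (by positivity))
    _ = (3*hi+2)/lo^3 * (1+x^2)^2 := by ring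

lemma P_upper (hlo : 0 < lo) (hs1 : lo ≤ s) (hs2 : s ≤ hi) (x : ℝ) :
    P s x ≤ (Real.sqrt (2*π*lo))⁻¹ * Real.exp ((8*hi)⁻¹) * Real.exp (-x^2/(4*hi)) := by
  have hs : 0 < s := lt_of_lt_of_le hlo hs1
  have hhi : 0 < hi := lt_of_le_of_lt' hs2 hs
  rw [P_eq_integral hs]
  have hbd : ∀ v ∈ Set.Icc (x - 2⁻¹) (x + 2⁻¹),
      g s v ≤ (Real.sqrt (2*π*lo))⁻¹ * Real.exp ((8*hi)⁻¹) * Real.exp (-x^2/(4*hi)) := by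
    intro v hv
    have h1 : (Real.sqrt (2*π*s))⁻¹ ≤ (Real.sqrt (2*π*lo))⁻¹ := by
      apply inv_anti₀ (Real.sqrt_pos.2 (by positivity))
      apply Real.sqrt_le_sqrt
      nlinarith [Real.pi_pos]
    have h2 : v^2 ≥ x^2/2 - 4⁻¹ := by
      have hd1 : x - v ≤ 2⁻¹ := by have := hv.1; linarith
      have hd2 : -(2⁻¹:ℝ) ≤ x - v := by have := hv.2; linarith
      have hq : (x - v)^2 ≤ 4⁻¹ := by
        nlinarith [mul_nonneg (by linarith : (0:ℝ) ≤ 2⁻¹ - (x-v))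
          (by linarith : (0:ℝ) ≤ (x-v) + 2⁻¹)]
      nlinarith [hq, sq_nonneg (x - 2*v)]
    have h3 : Real.exp (-v^2/(2*s)) ≤ Real.exp ((8*hi)⁻¹) * Real.exp (-x^2/(4*hi)) := by
      rw [← Real.exp_add]
      apply Real.exp_le_exp.2
      have h4 : -v^2/(2*s) ≤ -v^2/(2*hi) := by
        rw [neg_div, neg_div, neg_le_neg_iff, div_le_div_iff₀ (by positivity) (by positivity)]
        nlinarith [sq_nonneg v]
      have h5 : -v^2/(2*hi) ≤ (8*hi)⁻¹ + -x^2/(4*hi) := by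
        have e : (8*hi)⁻¹ + -x^2/(4*hi) = -(x^2/2 - 4⁻¹)/(2*hi) := by
          field_simp; ring
        rw [e, neg_div, neg_div, neg_le_neg_iff, div_le_div_iff₀ (by positivity) (by positivity)]
        nlinarith
      linarith
    calc g s v = (Real.sqrt (2*π*s))⁻¹ * Real.exp (-v^2/(2*s)) := rfl
      _ ≤ (Real.sqrt (2*π*lo))⁻¹ * (Real.exp ((8*hi)⁻¹) * Real.exp (-x^2/(4*hi))) := by
          apply mul_le_mul h1 h3 (Real.exp_pos _).le (by positivity)
      _ = _ := by ring
  calc (∫ v in (x - 2⁻¹)..(x + 2⁻¹), g s v)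
      ≤ ∫ _ in (x - 2⁻¹)..(x + 2⁻¹),
          (Real.sqrt (2*π*lo))⁻¹ * Real.exp ((8*hi)⁻¹) * Real.exp (-x^2/(4*hi)) := by
        refine intervalIntegral.integral_mono_on (by linarith)
          ((continuous_g s).intervalIntegrable _ _) intervalIntegrable_const hbd
    _ = _ := by rw [intervalIntegral.integral_const]; norm_num

lemma log_P_nonpos (hs : 0 < s) (x : ℝ) : Real.log (P s x) ≤ 0 :=
  Real.log_nonpos (P_pos hs x).le (P_le_one hs x)

lemma abs_log_P_le (hlo : 0 < lo) (hs1 : lo ≤ s) (hs2 : s ≤ hi) (x : ℝ) :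
    |Real.log (P s x)| ≤ (|Real.log (Real.sqrt (2*π*hi))| + lo⁻¹) * (1+x^2) := by
  have hs : 0 < s := lt_of_lt_of_le hlo hs1
  have hhi : 0 < hi := lt_of_le_of_lt' hs2 hs
  have hP := P_pos hs x
  have h1 : |Real.log (P s x)| = -Real.log (P s x) := by
    rw [abs_of_nonpos (log_P_nonpos hs x)]
  rw [h1]
  have h2 : Real.log (g s (|x| + 2⁻¹)) ≤ Real.log (P s x) :=
    Real.log_le_log (g_pos hs _) (P_lower hs x)
  have h3 : Real.log (g s (|x| + 2⁻¹)) =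
      -Real.log (Real.sqrt (2*π*s)) - (|x| + 2⁻¹)^2/(2*s) := by
    rw [g, Real.log_mul (by positivity) (Real.exp_ne_zero _), Real.log_inv, Real.log_exp]
    ring
  have h4 : Real.log (Real.sqrt (2*π*s)) ≤ |Real.log (Real.sqrt (2*π*hi))| := by
    calc Real.log (Real.sqrt (2*π*s)) ≤ Real.log (Real.sqrt (2*π*hi)) := by
          apply Real.log_le_log (Real.sqrt_pos.2 (by positivity))
          apply Real.sqrt_le_sqrt; nlinarith [Real.pi_pos]
      _ ≤ _ := le_abs_self _
  have h5 : (|x| + 2⁻¹)^2/(2*s) ≤ lo⁻¹ * (1+x^2) := by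
    have h6 := aux_m_sq_le x
    rw [div_le_iff₀ (by positivity), inv_mul_eq_div, div_mul_eq_mul_div, le_div_iff₀ hlo]
    nlinarith [sq_nonneg (|x| + 2⁻¹)]
  have h7 : -Real.log (P s x) ≤ |Real.log (Real.sqrt (2*π*hi))| + lo⁻¹ * (1+x^2) := by
    nlinarith [h2, h3, h4, h5]
  have h8 : (0:ℝ) ≤ |Real.log (Real.sqrt (2*π*hi))| := abs_nonneg _
  nlinarith [sq_nonneg x, inv_pos.2 hlo]

end UniformBounds

/-! ### Integrability and decay workhorses -/

lemma integrable_pow_gauss (k : ℕ) {β : ℝ} (hβ : 0 < β) :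
    Integrable (fun x : ℝ => x^k * Real.exp (-β*x^2)) := by
  have hk : (-1:ℝ) < (k:ℝ) := lt_of_lt_of_le (by norm_num) (Nat.cast_nonneg k)
  have := integrable_rpow_mul_exp_neg_mul_sq hβ hk
  simpa [Real.rpow_natCast] using this

lemma poly_gauss_sum (n : ℕ) (β : ℝ) :
    (fun x : ℝ => (1+x^2)^n * Real.exp (-β*x^2))
      = fun x => ∑ k ∈ Finset.range (n+1),
          (n.choose k : ℝ) * (x^(2*k) * Real.exp (-β*x^2)) := by
  funext x
  rw [add_comm (1:ℝ) (x^2), add_pow, Finset.sum_mul]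
  apply Finset.sum_congr rfl
  intro k _
  rw [pow_mul]
  ring

lemma integrable_poly_gauss (n : ℕ) {β : ℝ} (hβ : 0 < β) :
    Integrable (fun x : ℝ => (1+x^2)^n * Real.exp (-β*x^2)) := by
  rw [poly_gauss_sum]
  exact integrable_finset_sum _ (fun k _ => ((integrable_pow_gauss (2*k) hβ).const_mul _))

lemma tendsto_pow_gauss_atTop (k : ℕ) {β : ℝ} (hβ : 0 < β) :
    Tendsto (fun x : ℝ => x^k * Real.exp (-β*x^2)) atTop (𝓝 0) := by
  have h2 : Tendsto (fun x : ℝ => Real.exp (-(1/2) * x)) atTop (𝓝 0) := by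
    have h3 : Tendsto (fun x : ℝ => -(1/2) * x) atTop atBot :=
      tendsto_id.const_mul_atTop_of_neg (by norm_num : (-(1/2):ℝ) < 0)
    exact Real.tendsto_exp_atBot.comp h3
  have h := (rpow_mul_exp_neg_mul_sq_isLittleO_exp_neg hβ (k:ℝ)).isBigO.trans_tendsto h2
  simpa [Real.rpow_natCast] using h

lemma tendsto_poly_gauss_atTop (n : ℕ) {β : ℝ} (hβ : 0 < β) :
    Tendsto (fun x : ℝ => (1+x^2)^n * Real.exp (-β*x^2)) atTop (𝓝 0) := by
  rw [poly_gauss_sum]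
  have h := tendsto_finset_sum (Finset.range (n+1))
    (fun k (_ : k ∈ Finset.range (n+1)) =>
      ((tendsto_pow_gauss_atTop (2*k) hβ).const_mul ((n.choose k : ℝ))))
  simpa using h

lemma tendsto_poly_gauss_atBot (n : ℕ) {β : ℝ} (hβ : 0 < β) :
    Tendsto (fun x : ℝ => (1+x^2)^n * Real.exp (-β*x^2)) atBot (𝓝 0) := by
  have h := (tendsto_poly_gauss_atTop n hβ).comp tendsto_neg_atBot_atTop
  have heq : ((fun x : ℝ => (1+x^2)^n * Real.exp (-β*x^2)) ∘ fun x : ℝ => -x)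
      = fun x : ℝ => (1+x^2)^n * Real.exp (-β*x^2) := by
    funext x; simp [Function.comp, neg_sq]
  rwa [heq] at h

lemma integrable_of_poly_gauss_bound {f : ℝ → ℝ} {c β : ℝ} {n : ℕ} (hβ : 0 < β)
    (hf : AEStronglyMeasurable f volume)
    (hb : ∀ x, |f x| ≤ c * ((1+x^2)^n * Real.exp (-β*x^2))) : Integrable f := by
  apply Integrable.mono' ((integrable_poly_gauss n hβ).const_mul c) hf
  filter_upwards with x
  simpa [Real.norm_eq_abs, mul_assoc] using hb x

lemma tendsto_of_poly_gauss_bound {f : ℝ → ℝ} {c β : ℝ} {n : ℕ} (hβ : 0 < β)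
    (hb : ∀ x, |f x| ≤ c * ((1+x^2)^n * Real.exp (-β*x^2))) :
    Tendsto f atTop (𝓝 0) ∧ Tendsto f atBot (𝓝 0) := by
  constructor
  · apply squeeze_zero_norm hb
    simpa using (tendsto_poly_gauss_atTop n hβ).const_mul c
  · apply squeeze_zero_norm hb
    simpa using (tendsto_poly_gauss_atBot n hβ).const_mul c

/-! ### Generic ratio algebra helpers -/

section BdivHelpers
variable {A B Pv MA MB : ℝ}

lemma MA_nonneg (hP : 0 < Pv) (hA : |A| ≤ MA*Pv) : 0 ≤ MA := by
  nlinarith [abs_nonneg A]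

lemma bdiv1 (hP : 0 < Pv) (hA : |A| ≤ MA*Pv) (hB : |B| ≤ MB*Pv) :
    |A*B/Pv| ≤ MA*MB*Pv := by
  have hMA := MA_nonneg hP hA
  rw [abs_div, abs_mul, abs_of_pos hP, div_le_iff₀ hP]
  calc |A| * |B| ≤ (MA*Pv)*(MB*Pv) := mul_le_mul hA hB (abs_nonneg B) (by positivity)
    _ = MA*MB*Pv*Pv := by ring

lemma bdiv_sq (hP : 0 < Pv) (hA : |A| ≤ MA*Pv) : |A^2/Pv| ≤ MA^2*Pv := by
  have hMA := MA_nonneg hP hA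
  rw [abs_div, abs_pow, abs_of_pos hP, div_le_iff₀ hP]
  calc |A|^2 ≤ (MA*Pv)^2 := pow_le_pow_left₀ (abs_nonneg A) hA 2
    _ = MA^2*Pv*Pv := by ring

lemma bdiv_sq_mul (hP : 0 < Pv) (hA : |A| ≤ MA*Pv) (hB : |B| ≤ MB*Pv) :
    |A^2*B/Pv^2| ≤ MA^2*MB*Pv := by
  have hMA := MA_nonneg hP hA
  rw [abs_div, abs_mul, abs_pow, abs_pow, abs_of_pos hP, div_le_iff₀ (by positivity)]
  calc |A|^2 * |B| ≤ (MA*Pv)^2*(MB*Pv) := by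
        apply mul_le_mul (pow_le_pow_left₀ (abs_nonneg A) hA 2) hB (abs_nonneg B) (by positivity)
    _ = MA^2*MB*Pv*Pv^2 := by ring

lemma bdiv_cube (hP : 0 < Pv) (hA : |A| ≤ MA*Pv) : |A^3/Pv^2| ≤ MA^3*Pv := by
  have hMA := MA_nonneg hP hA
  rw [abs_div, abs_pow, abs_pow, abs_of_pos hP, div_le_iff₀ (by positivity)]
  calc |A|^3 ≤ (MA*Pv)^3 := pow_le_pow_left₀ (abs_nonneg A) hA 3
    _ = MA^3*Pv*Pv^2 := by ring

lemma bdiv_four (hP : 0 < Pv) (hA : |A| ≤ MA*Pv) : |A^4/Pv^3| ≤ MA^4*Pv := by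
  have hMA := MA_nonneg hP hA
  rw [abs_div, abs_pow, abs_pow, abs_of_pos hP, div_le_iff₀ (by positivity)]
  calc |A|^4 ≤ (MA*Pv)^4 := pow_le_pow_left₀ (abs_nonneg A) hA 4
    _ = MA^4*Pv*Pv^3 := by ring

end BdivHelpers

/-! ### Master bound -/

lemma base_bound (lo hi : ℝ) (hlo : 0 < lo) (hlh : lo ≤ hi) :
    ∃ C : ℝ, 0 < C ∧ ∀ s x, lo ≤ s → s ≤ hi →
      |P1 s x| ≤ C*(1+x^2)*P s x ∧ |P2 s x| ≤ C*(1+x^2)*P s x ∧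
      |P3 s x| ≤ C*(1+x^2)^2*P s x ∧ |Real.log (P s x)| + 1 ≤ C*(1+x^2) ∧
      P s x ≤ C*Real.exp (-x^2/(4*hi)) := by
  have hhi : 0 < hi := lt_of_lt_of_le hlo hlh
  set c1 := lo⁻¹ with hc1
  set c2 := (2+hi)/lo^2 with hc2
  set c3 := (3*hi+2)/lo^3 with hc3
  set c4 := |Real.log (Real.sqrt (2*π*hi))| + lo⁻¹ + 1 with hc4
  set c5 := (Real.sqrt (2*π*lo))⁻¹ * Real.exp ((8*hi)⁻¹) with hc5
  have t1 : 0 < c1 := by positivity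
  have t2 : 0 ≤ c2 := div_nonneg (by linarith) (by positivity)
  have t3 : 0 ≤ c3 := div_nonneg (by linarith) (by positivity)
  have t4 : 0 ≤ c4 := by positivity
  have t5 : 0 ≤ c5 := by positivity
  refine ⟨c1 + c2 + c3 + c4 + c5, by linarith, ?_⟩
  intro s x hs1 hs2
  set C := c1 + c2 + c3 + c4 + c5 with hC
  have hs : 0 < s := lt_of_lt_of_le hlo hs1
  have hP := P_pos hs x
  have hx1 : (0:ℝ) ≤ 1+x^2 := by positivity
  refine ⟨?_, ?_, ?_, ?_, ?_⟩
  · calc |P1 s x| ≤ c1*(1+x^2)*P s x := P1_bound hlo hs1 hs2 x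
      _ ≤ C*(1+x^2)*P s x := by
          apply mul_le_mul_of_nonneg_right _ hP.le
          apply mul_le_mul_of_nonneg_right _ hx1
          linarith
  · calc |P2 s x| ≤ c2*(1+x^2)*P s x := P2_bound hlo hs1 hs2 x
      _ ≤ C*(1+x^2)*P s x := by
          apply mul_le_mul_of_nonneg_right _ hP.le
          apply mul_le_mul_of_nonneg_right _ hx1
          linarith
  · calc |P3 s x| ≤ c3*(1+x^2)^2*P s x := P3_bound hlo hs1 hs2 x
      _ ≤ C*(1+x^2)^2*P s x := by
          apply mul_le_mul_of_nonneg_right _ hP.le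
          apply mul_le_mul_of_nonneg_right _ (by positivity)
          linarith
  · have h := abs_log_P_le hlo hs1 hs2 x
    have h1 : (1:ℝ) ≤ 1+x^2 := by nlinarith
    calc |Real.log (P s x)| + 1
        ≤ (|Real.log (Real.sqrt (2*π*hi))| + lo⁻¹) * (1+x^2) + 1*(1+x^2) := by
          rw [one_mul]; exact add_le_add h h1
      _ = c4*(1+x^2) := by rw [hc4]; ring
      _ ≤ C*(1+x^2) := by
          apply mul_le_mul_of_nonneg_right _ hx1
          linarith
  · calc P s x ≤ c5*Real.exp (-x^2/(4*hi)) := by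
          have := P_upper hlo hs1 hs2 x
          rw [hc5, mul_assoc] at *
          linarith [this]
      _ ≤ C*Real.exp (-x^2/(4*hi)) := by
          apply mul_le_mul_of_nonneg_right _ (Real.exp_pos _).le
          linarith

lemma le_final {C u E Pv G : ℝ} (hC : 0 < C) (hu : 1 ≤ u) (hE : 0 ≤ E)
    (hPu : Pv ≤ C*E) (hPv : 0 ≤ Pv) {a b : ℕ} (ha : a ≤ 5) (hb : b ≤ 6)
    (hG : G ≤ C^a * u^b * Pv) : G ≤ (C+1)^6 * (u^6 * E) := by
  calc G ≤ C^a * u^b * Pv := hG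
    _ ≤ C^a * u^b * (C*E) := by
        apply mul_le_mul_of_nonneg_left hPu
        have hu0 : (0:ℝ) ≤ u := by linarith
        positivity
    _ = (C^a*C) * u^b * E := by ring
    _ ≤ (C+1)^6 * u^6 * E := by
        apply mul_le_mul_of_nonneg_right _ hE
        have hu0 : (0:ℝ) ≤ u := by linarith
        apply mul_le_mul _ (pow_le_pow_right₀ hu hb) (by positivity) (by positivity)
        calc C^a*C = C^(a+1) := by rw [pow_succ]
          _ ≤ (C+1)^(a+1) := pow_le_pow_left₀ hC.le (by linarith) _
          _ ≤ (C+1)^6 := pow_le_pow_right₀ (by linarith) (by omega)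
    _ = (C+1)^6 * (u^6 * E) := by ring

lemma big_bound (lo hi : ℝ) (hlo : 0 < lo) (hlh : lo ≤ hi) :
    ∃ C : ℝ, 0 < C ∧ ∀ s x, lo ≤ s → s ≤ hi →
      |P s x * Real.log (P s x)| ≤ C * ((1+x^2)^6 * Real.exp (-x^2/(4*hi))) ∧
      |P2 s x * (Real.log (P s x) + 1)| ≤ C * ((1+x^2)^6 * Real.exp (-x^2/(4*hi))) ∧
      |P1 s x * (Real.log (P s x) + 1)| ≤ C * ((1+x^2)^6 * Real.exp (-x^2/(4*hi))) ∧
      |P1 s x^2 / P s x| ≤ C * ((1+x^2)^6 * Real.exp (-x^2/(4*hi))) ∧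
      |P2 s x^2 / P s x| ≤ C * ((1+x^2)^6 * Real.exp (-x^2/(4*hi))) ∧
      |P1 s x * P3 s x / P s x| ≤ C * ((1+x^2)^6 * Real.exp (-x^2/(4*hi))) ∧
      |P1 s x^2 * P2 s x / P s x^2| ≤ C * ((1+x^2)^6 * Real.exp (-x^2/(4*hi))) ∧
      |P1 s x^4 / P s x^3| ≤ C * ((1+x^2)^6 * Real.exp (-x^2/(4*hi))) ∧
      |P1 s x * P2 s x / P s x| ≤ C * ((1+x^2)^6 * Real.exp (-x^2/(4*hi))) ∧
      |P1 s x^3 / P s x^2| ≤ C * ((1+x^2)^6 * Real.exp (-x^2/(4*hi))) := by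
  obtain ⟨C, hCpos, hB⟩ := base_bound lo hi hlo hlh
  refine ⟨(C+1)^6, by positivity, ?_⟩
  intro s x hs1 hs2
  obtain ⟨h1, h2, h3, h4, h5⟩ := hB s x hs1 hs2
  have hs : 0 < s := lt_of_lt_of_le hlo hs1
  have hP := P_pos hs x
  set u := 1+x^2 with hu
  set E := Real.exp (-x^2/(4*hi)) with hE
  have hu1 : (1:ℝ) ≤ u := by rw [hu]; nlinarith [sq_nonneg x]
  have hE0 : (0:ℝ) ≤ E := (Real.exp_pos _).le
  have hlog : |Real.log (P s x)| ≤ C*u := by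
    have := h4; linarith [abs_nonneg (Real.log (P s x))]
  have hlog1 : |Real.log (P s x) + 1| ≤ C*u := by
    calc |Real.log (P s x) + 1| ≤ |Real.log (P s x)| + 1 := by
          calc |Real.log (P s x) + 1| ≤ |Real.log (P s x)| + |(1:ℝ)| := abs_add_le _ _
            _ = |Real.log (P s x)| + 1 := by norm_num
      _ ≤ C*u := h4
  refine ⟨?_, ?_, ?_, ?_, ?_, ?_, ?_, ?_, ?_, ?_⟩
  · refine le_final hCpos hu1 hE0 h5 hP.le (by norm_num : 1 ≤ 5) (by norm_num : 1 ≤ 6) ?_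
    rw [abs_mul, abs_of_pos hP]
    calc P s x * |Real.log (P s x)| ≤ P s x * (C*u) :=
          mul_le_mul_of_nonneg_left hlog hP.le
      _ = C^1*u^1*P s x := by ring
  · refine le_final hCpos hu1 hE0 h5 hP.le (by norm_num : 2 ≤ 5) (by norm_num : 2 ≤ 6) ?_
    rw [abs_mul]
    calc |P2 s x| * |Real.log (P s x) + 1| ≤ (C*u*P s x) * (C*u) := by
          apply mul_le_mul h2 hlog1 (abs_nonneg _) (by positivity)
      _ = C^2*u^2*P s x := by ring
  · refine le_final hCpos hu1 hE0 h5 hP.le (by norm_num : 2 ≤ 5) (by norm_num : 2 ≤ 6) ?_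
    rw [abs_mul]
    calc |P1 s x| * |Real.log (P s x) + 1| ≤ (C*u*P s x) * (C*u) := by
          apply mul_le_mul h1 hlog1 (abs_nonneg _) (by positivity)
      _ = C^2*u^2*P s x := by ring
  · refine le_final hCpos hu1 hE0 h5 hP.le (by norm_num : 2 ≤ 5) (by norm_num : 2 ≤ 6) ?_
    calc |P1 s x^2 / P s x| ≤ (C*u)^2*P s x := bdiv_sq hP h1
      _ = C^2*u^2*P s x := by ring
  · refine le_final hCpos hu1 hE0 h5 hP.le (by norm_num : 2 ≤ 5) (by norm_num : 2 ≤ 6) ?_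
    calc |P2 s x^2 / P s x| ≤ (C*u)^2*P s x := bdiv_sq hP h2
      _ = C^2*u^2*P s x := by ring
  · refine le_final hCpos hu1 hE0 h5 hP.le (by norm_num : 2 ≤ 5) (by norm_num : 3 ≤ 6) ?_
    calc |P1 s x * P3 s x / P s x| ≤ (C*u)*(C*u^2)*P s x := bdiv1 hP h1 h3
      _ = C^2*u^3*P s x := by ring
  · refine le_final hCpos hu1 hE0 h5 hP.le (by norm_num : 3 ≤ 5) (by norm_num : 3 ≤ 6) ?_
    calc |P1 s x^2 * P2 s x / P s x^2| ≤ (C*u)^2*(C*u)*P s x := bdiv_sq_mul hP h1 h2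
      _ = C^3*u^3*P s x := by ring
  · refine le_final hCpos hu1 hE0 h5 hP.le (by norm_num : 4 ≤ 5) (by norm_num : 4 ≤ 6) ?_
    calc |P1 s x^4 / P s x^3| ≤ (C*u)^4*P s x := bdiv_four hP h1
      _ = C^4*u^4*P s x := by ring
  · refine le_final hCpos hu1 hE0 h5 hP.le (by norm_num : 2 ≤ 5) (by norm_num : 2 ≤ 6) ?_
    calc |P1 s x * P2 s x / P s x| ≤ (C*u)*(C*u)*P s x := bdiv1 hP h1 h2
      _ = C^2*u^2*P s x := by ring
  · refine le_final hCpos hu1 hE0 h5 hP.le (by norm_num : 3 ≤ 5) (by norm_num : 3 ≤ 6) ?_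
    calc |P1 s x^3 / P s x^2| ≤ (C*u)^3*P s x := bdiv_cube hP h1
      _ = C^3*u^3*P s x := by ring

/-! ### `∫ f' = 0` helper -/

lemma integral_deriv_eq_zero {f f' : ℝ → ℝ} (hd : ∀ x, HasDerivAt f (f' x) x)
    (hi : Integrable f') (ht : Tendsto f atTop (𝓝 0)) (hb : Tendsto f atBot (𝓝 0)) :
    ∫ x, f' x = 0 := by
  have h1 : ∫ x in Iic (0:ℝ), f' x = f 0 - 0 :=
    integral_Iic_of_hasDerivAt_of_tendsto' (fun x _ => hd x) hi.integrableOn hb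
  have h2 : ∫ x in Ioi (0:ℝ), f' x = 0 - f 0 :=
    integral_Ioi_of_hasDerivAt_of_tendsto' (fun x _ => hd x) hi.integrableOn ht
  have h3 : (∫ x in Iic (0:ℝ), f' x) + ∫ x in Ioi (0:ℝ), f' x = ∫ x, f' x :=
    intervalIntegral.integral_Iic_add_Ioi hi.integrableOn hi.integrableOn
  linarith

/-! ### Derivatives of combined integrands -/

section CombinedDerivs
variable {s : ℝ} (hs : 0 < s) (x : ℝ)
include hs

lemma hasDerivAt_logP_x : HasDerivAt (fun x => Real.log (P s x)) (P1 s x / P s x) x :=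
  (hasDerivAt_P_x hs x).log (ne_of_gt (P_pos hs x))

/-- x-derivative of `X₀ = P1·(log P + 1)`. -/
lemma hasDerivAt_X0 :
    HasDerivAt (fun x => P1 s x * (Real.log (P s x) + 1))
      (P2 s x * (Real.log (P s x) + 1) + P1 s x^2 / P s x) x := by
  have h := (hasDerivAt_P1_x hs x).mul ((hasDerivAt_logP_x hs x).add_const 1)
  refine h.congr_deriv ?_
  have hP := ne_of_gt (P_pos hs x)
  field_simp

/-- x-derivative of `X₁ = P1·P2/P`. -/
lemma hasDerivAt_X1 :
    HasDerivAt (fun x => P1 s x * P2 s x / P s x)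
      (P2 s x^2/P s x + P1 s x * P3 s x/P s x - P1 s x^2 * P2 s x/P s x^2) x := by
  have h := ((hasDerivAt_P1_x hs x).mul (hasDerivAt_P2_x hs x)).div
    (hasDerivAt_P_x hs x) (ne_of_gt (P_pos hs x))
  refine h.congr_deriv ?_
  have hP := ne_of_gt (P_pos hs x)
  simp only [Pi.mul_apply]
  field_simp

/-- x-derivative of `X₂ = P1³/P²`. -/
lemma hasDerivAt_X2 :
    HasDerivAt (fun x => P1 s x^3 / P s x^2)
      (3*(P1 s x^2 * P2 s x/P s x^2) - 2*(P1 s x^4/P s x^3)) x := by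
  have hnum := (hasDerivAt_P1_x hs x).pow 3
  have hden := (hasDerivAt_P_x hs x).pow 2
  have h := HasDerivAt.div hnum hden (pow_ne_zero 2 (ne_of_gt (P_pos hs x)))
  refine h.congr_deriv ?_
  have hP := ne_of_gt (P_pos hs x)
  simp only [Pi.pow_apply]
  field_simp
  ring

/-- s-derivative of `P·log P`. -/
lemma hasDerivAt_ent_s (x : ℝ) :
    HasDerivAt (fun s => P s x * Real.log (P s x))
      (2⁻¹ * (P2 s x * (Real.log (P s x) + 1))) s := by
  have hlog : HasDerivAt (fun s => Real.log (P s x))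
      ((2⁻¹ * P2 s x) / P s x) s :=
    (hasDerivAt_P_s hs x).log (ne_of_gt (P_pos hs x))
  have h := (hasDerivAt_P_s hs x).mul hlog
  refine h.congr_deriv ?_
  have hP := ne_of_gt (P_pos hs x)
  field_simp

/-- s-derivative of `P1²/P`. -/
lemma hasDerivAt_fisher_s (x : ℝ) :
    HasDerivAt (fun s => P1 s x^2 / P s x)
      (P1 s x * P3 s x / P s x - 2⁻¹ * (P1 s x^2 * P2 s x / P s x^2)) s := by
  have hnum := (hasDerivAt_P1_s hs x).pow 2
  have h := HasDerivAt.div hnum (hasDerivAt_P_s hs x) (ne_of_gt (P_pos hs x))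
  refine h.congr_deriv ?_
  have hP := ne_of_gt (P_pos hs x)
  simp only [Pi.pow_apply]
  field_simp
  ring

end CombinedDerivs

/-! ### Continuity in x of combined integrands -/

section Cont
variable {s : ℝ} (hs : 0 < s)
include hs

lemma continuous_logP : Continuous (fun x => Real.log (P s x)) :=
  (continuous_P_x hs).log (fun x => ne_of_gt (P_pos hs x))

lemma continuous_entIntegrand : Continuous (fun x => P s x * Real.log (P s x)) :=
  (continuous_P_x hs).mul (continuous_logP hs)

lemma continuous_T2' : Continuous (fun x => P2 s x * (Real.log (P s x) + 1)) :=
  (continuous_P2_x hs).mul ((continuous_logP hs).add continuous_const)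

lemma continuous_fisherIntegrand : Continuous (fun x => P1 s x^2 / P s x) :=
  ((continuous_P1_x hs).pow 2).div (continuous_P_x hs) (fun x => ne_of_gt (P_pos hs x))

lemma continuous_T1 : Continuous (fun x => P2 s x^2 / P s x) :=
  ((continuous_P2_x hs).pow 2).div (continuous_P_x hs) (fun x => ne_of_gt (P_pos hs x))

lemma continuous_T2 : Continuous (fun x => P1 s x * P3 s x / P s x) :=
  ((continuous_P1_x hs).mul (continuous_P3_x hs)).div (continuous_P_x hs)
    (fun x => ne_of_gt (P_pos hs x))

lemma continuous_T3 : Continuous (fun x => P1 s x^2 * P2 s x / P s x^2) :=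
  (((continuous_P1_x hs).pow 2).mul (continuous_P2_x hs)).div ((continuous_P_x hs).pow 2)
    (fun x => pow_ne_zero 2 (ne_of_gt (P_pos hs x)))

lemma continuous_T4 : Continuous (fun x => P1 s x^4 / P s x^3) :=
  ((continuous_P1_x hs).pow 4).div ((continuous_P_x hs).pow 3)
    (fun x => pow_ne_zero 3 (ne_of_gt (P_pos hs x)))

end Cont

/-! ### Main analytic lemmas -/

noncomputable def ent (s : ℝ) : ℝ := ∫ x, P s x * Real.log (P s x)
noncomputable def fisher (s : ℝ) : ℝ := ∫ x, P1 s x^2 / P s x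

lemma exp_div_form {γ x : ℝ} : Real.exp (-x^2/γ) = Real.exp (-γ⁻¹*x^2) := by
  rw [neg_div, div_eq_inv_mul, neg_mul]

lemma integrable_of_gauss_bound {f : ℝ → ℝ} {c γ : ℝ} {n : ℕ} (hγ : 0 < γ)
    (hf : AEStronglyMeasurable f volume)
    (hb : ∀ x, |f x| ≤ c * ((1+x^2)^n * Real.exp (-x^2/γ))) : Integrable f := by
  apply integrable_of_poly_gauss_bound (β := γ⁻¹) (inv_pos.2 hγ) hf
  intro x
  have h := hb x
  rwa [exp_div_form] at h

lemma tendsto_of_gauss_bound {f : ℝ → ℝ} {c γ : ℝ} {n : ℕ} (hγ : 0 < γ)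
    (hb : ∀ x, |f x| ≤ c * ((1+x^2)^n * Real.exp (-x^2/γ))) :
    Tendsto f atTop (𝓝 0) ∧ Tendsto f atBot (𝓝 0) := by
  apply tendsto_of_poly_gauss_bound (β := γ⁻¹) (inv_pos.2 hγ)
  intro x
  have h := hb x
  rwa [exp_div_form] at h

lemma integrable_bound_fn (c γ : ℝ) (hγ : 0 < γ) (n : ℕ) :
    Integrable (fun x : ℝ => c * ((1+x^2)^n * Real.exp (-x^2/γ))) := by
  have heq : (fun x : ℝ => c * ((1+x^2)^n * Real.exp (-x^2/γ)))
      = fun x : ℝ => c * ((1+x^2)^n * Real.exp (-γ⁻¹*x^2)) := by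
    funext x; rw [exp_div_form]
  rw [heq]
  have h := (integrable_poly_gauss n (inv_pos.2 hγ)).const_mul c
  simpa [mul_assoc] using h

section FixedS
variable {s : ℝ} (hs : 0 < s)
include hs

lemma I_ent : Integrable (fun x => P s x * Real.log (P s x)) := by
  obtain ⟨C, hC, hB⟩ := big_bound s s hs le_rfl
  exact integrable_of_gauss_bound (by linarith : (0:ℝ) < 4*s)
    (continuous_entIntegrand hs).aestronglyMeasurable
    (fun x => (hB s x le_rfl le_rfl).1)

lemma I_P2log : Integrable (fun x => P2 s x * (Real.log (P s x) + 1)) := by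
  obtain ⟨C, hC, hB⟩ := big_bound s s hs le_rfl
  exact integrable_of_gauss_bound (by linarith : (0:ℝ) < 4*s)
    (continuous_T2' hs).aestronglyMeasurable
    (fun x => (hB s x le_rfl le_rfl).2.1)

lemma I_fish : Integrable (fun x => P1 s x^2 / P s x) := by
  obtain ⟨C, hC, hB⟩ := big_bound s s hs le_rfl
  exact integrable_of_gauss_bound (by linarith : (0:ℝ) < 4*s)
    (continuous_fisherIntegrand hs).aestronglyMeasurable
    (fun x => (hB s x le_rfl le_rfl).2.2.2.1)

lemma I_T1 : Integrable (fun x => P2 s x^2 / P s x) := by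
  obtain ⟨C, hC, hB⟩ := big_bound s s hs le_rfl
  exact integrable_of_gauss_bound (by linarith : (0:ℝ) < 4*s)
    (continuous_T1 hs).aestronglyMeasurable
    (fun x => (hB s x le_rfl le_rfl).2.2.2.2.1)

lemma I_T2 : Integrable (fun x => P1 s x * P3 s x / P s x) := by
  obtain ⟨C, hC, hB⟩ := big_bound s s hs le_rfl
  exact integrable_of_gauss_bound (by linarith : (0:ℝ) < 4*s)
    (continuous_T2 hs).aestronglyMeasurable
    (fun x => (hB s x le_rfl le_rfl).2.2.2.2.2.1)

lemma I_T3 : Integrable (fun x => P1 s x^2 * P2 s x / P s x^2) := by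
  obtain ⟨C, hC, hB⟩ := big_bound s s hs le_rfl
  exact integrable_of_gauss_bound (by linarith : (0:ℝ) < 4*s)
    (continuous_T3 hs).aestronglyMeasurable
    (fun x => (hB s x le_rfl le_rfl).2.2.2.2.2.2.1)

lemma I_T4 : Integrable (fun x => P1 s x^4 / P s x^3) := by
  obtain ⟨C, hC, hB⟩ := big_bound s s hs le_rfl
  exact integrable_of_gauss_bound (by linarith : (0:ℝ) < 4*s)
    (continuous_T4 hs).aestronglyMeasurable
    (fun x => (hB s x le_rfl le_rfl).2.2.2.2.2.2.2.1)

lemma tendsto_X0 : Tendsto (fun x => P1 s x * (Real.log (P s x) + 1)) atTop (𝓝 0) ∧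
    Tendsto (fun x => P1 s x * (Real.log (P s x) + 1)) atBot (𝓝 0) := by
  obtain ⟨C, hC, hB⟩ := big_bound s s hs le_rfl
  exact tendsto_of_gauss_bound (by linarith : (0:ℝ) < 4*s)
    (fun x => (hB s x le_rfl le_rfl).2.2.1)

lemma tendsto_X1 : Tendsto (fun x => P1 s x * P2 s x / P s x) atTop (𝓝 0) ∧
    Tendsto (fun x => P1 s x * P2 s x / P s x) atBot (𝓝 0) := by
  obtain ⟨C, hC, hB⟩ := big_bound s s hs le_rfl
  exact tendsto_of_gauss_bound (by linarith : (0:ℝ) < 4*s)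
    (fun x => (hB s x le_rfl le_rfl).2.2.2.2.2.2.2.2.1)

lemma tendsto_X2 : Tendsto (fun x => P1 s x^3 / P s x^2) atTop (𝓝 0) ∧
    Tendsto (fun x => P1 s x^3 / P s x^2) atBot (𝓝 0) := by
  obtain ⟨C, hC, hB⟩ := big_bound s s hs le_rfl
  exact tendsto_of_gauss_bound (by linarith : (0:ℝ) < 4*s)
    (fun x => (hB s x le_rfl le_rfl).2.2.2.2.2.2.2.2.2)

/-- de Bruijn-type integration by parts:  `∫ P2 (log P + 1) = - ∫ P1²/P`. -/
lemma ibp0 : ∫ x, P2 s x * (Real.log (P s x) + 1) = - fisher s := by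
  have hz := integral_deriv_eq_zero (hasDerivAt_X0 hs)
    ((I_P2log hs).add (I_fish hs)) (tendsto_X0 hs).1 (tendsto_X0 hs).2
  rw [integral_add (I_P2log hs) (I_fish hs)] at hz
  rw [fisher]
  linarith

/-- First McKean IBP identity. -/
lemma ibp1 : (∫ x, P2 s x^2/P s x) + (∫ x, P1 s x * P3 s x/P s x)
    - (∫ x, P1 s x^2 * P2 s x/P s x^2) = 0 := by
  have hz := integral_deriv_eq_zero (hasDerivAt_X1 hs)
    (((I_T1 hs).add (I_T2 hs)).sub (I_T3 hs)) (tendsto_X1 hs).1 (tendsto_X1 hs).2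
  have hadd : Integrable (fun x => P2 s x^2/P s x + P1 s x * P3 s x/P s x) :=
    (I_T1 hs).add (I_T2 hs)
  have h1 : (∫ x, (P2 s x^2/P s x + P1 s x * P3 s x/P s x) - P1 s x^2 * P2 s x/P s x^2)
      = (∫ x, P2 s x^2/P s x + P1 s x * P3 s x/P s x)
        - ∫ x, P1 s x^2 * P2 s x/P s x^2 := integral_sub hadd (I_T3 hs)
  have h2 : (∫ x, P2 s x^2/P s x + P1 s x * P3 s x/P s x)
      = (∫ x, P2 s x^2/P s x) + ∫ x, P1 s x * P3 s x/P s x :=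
    integral_add (I_T1 hs) (I_T2 hs)
  linarith [hz, h1, h2]

/-- Second McKean IBP identity. -/
lemma ibp2 : 3*(∫ x, P1 s x^2 * P2 s x/P s x^2) - 2*(∫ x, P1 s x^4/P s x^3) = 0 := by
  have hz := integral_deriv_eq_zero (hasDerivAt_X2 hs)
    (((I_T3 hs).const_mul 3).sub ((I_T4 hs).const_mul 2)) (tendsto_X2 hs).1 (tendsto_X2 hs).2
  have h1 : (∫ x, 3*(P1 s x^2 * P2 s x/P s x^2) - 2*(P1 s x^4/P s x^3))
      = (∫ x, 3*(P1 s x^2 * P2 s x/P s x^2)) - ∫ x, 2*(P1 s x^4/P s x^3) :=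
    integral_sub ((I_T3 hs).const_mul 3) ((I_T4 hs).const_mul 2)
  have h2 : (∫ x, 3*(P1 s x^2 * P2 s x/P s x^2)) = 3 * ∫ x, P1 s x^2 * P2 s x/P s x^2 :=
    integral_const_mul 3 _
  have h3 : (∫ x, 2*(P1 s x^4/P s x^3)) = 2 * ∫ x, P1 s x^4/P s x^3 :=
    integral_const_mul 2 _
  linarith [hz, h1, h2, h3]

end FixedS

lemma P1_zero {s : ℝ} (hs : 0 < s) : P1 s 0 = 0 := by
  have h : g s (0 - 2⁻¹) = g s (0 + 2⁻¹) := by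
    rw [g, g]
    norm_num
  rw [P1, h, sub_self]

lemma P2_zero_neg {s : ℝ} (hs : 0 < s) : P2 s 0 < 0 := by
  have he : g s (0 - 2⁻¹) = g s (0 + 2⁻¹) := by
    rw [g, g]; norm_num
  have hG : 0 < g s (0 + 2⁻¹) := g_pos hs _
  rw [P2, g1, g1, he]
  have hrw : -((0+2⁻¹)/s)*g s (0+2⁻¹) - -((0-2⁻¹)/s)*g s (0+2⁻¹) = -(g s (0+2⁻¹)/s) := by
    ring
  rw [hrw]
  rw [neg_lt_zero]
  positivity

/-- Derivative of the (un-negated) entropy integral: de Bruijn step 1. -/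
lemma hasDerivAt_ent {s₀ : ℝ} (hs₀ : 0 < s₀) :
    HasDerivAt ent (∫ x, 2⁻¹ * (P2 s₀ x * (Real.log (P s₀ x) + 1))) s₀ := by
  obtain ⟨C, hC, hB⟩ := big_bound (s₀/2) (2*s₀) (by linarith) (by linarith)
  have hball : ∀ t ∈ Metric.ball s₀ (s₀/2), s₀/2 ≤ t ∧ t ≤ 2*s₀ := by
    intro t ht
    rw [Metric.mem_ball, Real.dist_eq, abs_lt] at ht
    constructor <;> linarith [ht.1, ht.2]
  have hmeas : ∀ᶠ t in 𝓝 s₀, AEStronglyMeasurable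
      (fun x => P t x * Real.log (P t x)) (volume : Measure ℝ) := by
    filter_upwards [Ioi_mem_nhds (by linarith : s₀/2 < s₀)] with t ht
    exact (continuous_entIntegrand (lt_trans (by linarith) (mem_Ioi.1 ht))).aestronglyMeasurable
  have hint : Integrable (fun x => P s₀ x * Real.log (P s₀ x)) := I_ent hs₀
  have hmeas' : AEStronglyMeasurable
      (fun x => 2⁻¹ * (P2 s₀ x * (Real.log (P s₀ x) + 1))) (volume : Measure ℝ) :=
    (continuous_const.mul (continuous_T2' hs₀)).aestronglyMeasurable
  have hbnd : ∀ᵐ x : ℝ, ∀ t ∈ Metric.ball s₀ (s₀/2),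
      ‖2⁻¹ * (P2 t x * (Real.log (P t x) + 1))‖
        ≤ C * ((1+x^2)^6 * Real.exp (-x^2/(4*(2*s₀)))) := by
    filter_upwards with x t ht
    obtain ⟨ht1, ht2⟩ := hball t ht
    have hb := (hB t x ht1 ht2).2.1
    rw [Real.norm_eq_abs, abs_mul, show |(2:ℝ)⁻¹| = 2⁻¹ by norm_num]
    linarith [abs_nonneg (P2 t x * (Real.log (P t x) + 1))]
  have hbint : Integrable (fun x : ℝ => C * ((1+x^2)^6 * Real.exp (-x^2/(4*(2*s₀))))) :=
    integrable_bound_fn C _ (by linarith) 6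
  have hdiff : ∀ᵐ x : ℝ, ∀ t ∈ Metric.ball s₀ (s₀/2),
      HasDerivAt (fun s => P s x * Real.log (P s x))
        (2⁻¹ * (P2 t x * (Real.log (P t x) + 1))) t := by
    filter_upwards with x t ht
    obtain ⟨ht1, ht2⟩ := hball t ht
    exact hasDerivAt_ent_s (by linarith) x
  have h := hasDerivAt_integral_of_dominated_loc_of_deriv_le (μ := volume)
    (F := fun s x => P s x * Real.log (P s x))
    (F' := fun s x => 2⁻¹ * (P2 s x * (Real.log (P s x) + 1)))
    (bound := fun x => C * ((1+x^2)^6 * Real.exp (-x^2/(4*(2*s₀)))))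
    (Metric.ball_mem_nhds s₀ (by linarith : (0:ℝ) < s₀/2)) hmeas hint hmeas' hbnd hbint hdiff
  exact h.2

/-- Derivative of the Fisher information integral. -/
lemma hasDerivAt_fisher {s₀ : ℝ} (hs₀ : 0 < s₀) :
    HasDerivAt fisher
      (∫ x, (P1 s₀ x * P3 s₀ x / P s₀ x - 2⁻¹ * (P1 s₀ x^2 * P2 s₀ x / P s₀ x^2))) s₀ := by
  obtain ⟨C, hC, hB⟩ := big_bound (s₀/2) (2*s₀) (by linarith) (by linarith)
  have hball : ∀ t ∈ Metric.ball s₀ (s₀/2), s₀/2 ≤ t ∧ t ≤ 2*s₀ := by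
    intro t ht
    rw [Metric.mem_ball, Real.dist_eq, abs_lt] at ht
    constructor <;> linarith [ht.1, ht.2]
  have hmeas : ∀ᶠ t in 𝓝 s₀, AEStronglyMeasurable
      (fun x => P1 t x^2 / P t x) (volume : Measure ℝ) := by
    filter_upwards [Ioi_mem_nhds (by linarith : s₀/2 < s₀)] with t ht
    exact (continuous_fisherIntegrand (lt_trans (by linarith) (mem_Ioi.1 ht))).aestronglyMeasurable
  have hint : Integrable (fun x => P1 s₀ x^2 / P s₀ x) := I_fish hs₀
  have hmeas' : AEStronglyMeasurable
      (fun x => P1 s₀ x * P3 s₀ x / P s₀ x - 2⁻¹ * (P1 s₀ x^2 * P2 s₀ x / P s₀ x^2))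
      (volume : Measure ℝ) :=
    ((continuous_T2 hs₀).sub (continuous_const.mul (continuous_T3 hs₀))).aestronglyMeasurable
  have hbnd : ∀ᵐ x : ℝ, ∀ t ∈ Metric.ball s₀ (s₀/2),
      ‖P1 t x * P3 t x / P t x - 2⁻¹ * (P1 t x^2 * P2 t x / P t x^2)‖
        ≤ 2*C * ((1+x^2)^6 * Real.exp (-x^2/(4*(2*s₀)))) := by
    filter_upwards with x t ht
    obtain ⟨ht1, ht2⟩ := hball t ht
    have hb1 := (hB t x ht1 ht2).2.2.2.2.2.1
    have hb2 := (hB t x ht1 ht2).2.2.2.2.2.2.1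
    rw [Real.norm_eq_abs]
    calc |P1 t x * P3 t x / P t x - 2⁻¹ * (P1 t x^2 * P2 t x / P t x^2)|
        ≤ |P1 t x * P3 t x / P t x| + |2⁻¹ * (P1 t x^2 * P2 t x / P t x^2)| := abs_sub _ _
      _ = |P1 t x * P3 t x / P t x| + 2⁻¹ * |P1 t x^2 * P2 t x / P t x^2| := by
          rw [abs_mul, show |(2:ℝ)⁻¹| = 2⁻¹ by norm_num]
      _ ≤ 2*C * ((1+x^2)^6 * Real.exp (-x^2/(4*(2*s₀)))) := by
          have := abs_nonneg (P1 t x^2 * P2 t x / P t x^2)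
          linarith
  have hbint : Integrable (fun x : ℝ => 2*C * ((1+x^2)^6 * Real.exp (-x^2/(4*(2*s₀))))) :=
    integrable_bound_fn (2*C) _ (by linarith) 6
  have hdiff : ∀ᵐ x : ℝ, ∀ t ∈ Metric.ball s₀ (s₀/2),
      HasDerivAt (fun s => P1 s x^2 / P s x)
        (P1 t x * P3 t x / P t x - 2⁻¹ * (P1 t x^2 * P2 t x / P t x^2)) t := by
    filter_upwards with x t ht
    obtain ⟨ht1, ht2⟩ := hball t ht
    exact hasDerivAt_fisher_s (by linarith) x
  have h := hasDerivAt_integral_of_dominated_loc_of_deriv_le (μ := volume)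
    (F := fun s x => P1 s x^2 / P s x)
    (F' := fun s x => P1 s x * P3 s x / P s x - 2⁻¹ * (P1 s x^2 * P2 s x / P s x^2))
    (bound := fun x => 2*C * ((1+x^2)^6 * Real.exp (-x^2/(4*(2*s₀)))))
    (Metric.ball_mem_nhds s₀ (by linarith : (0:ℝ) < s₀/2)) hmeas hint hmeas' hbnd hbint hdiff
  exact h.2

/-- The derivative of the Fisher information is strictly negative (McKean). -/
lemma fisher_deriv_neg {s : ℝ} (hs : 0 < s) :
    (∫ x, (P1 s x * P3 s x / P s x - 2⁻¹ * (P1 s x^2 * P2 s x / P s x^2))) < 0 := by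
  have hsplit : (∫ x, (P1 s x * P3 s x / P s x - 2⁻¹ * (P1 s x^2 * P2 s x / P s x^2)))
      = (∫ x, P1 s x * P3 s x / P s x) - 2⁻¹ * ∫ x, P1 s x^2 * P2 s x / P s x^2 := by
    have h1 : (∫ x, (P1 s x * P3 s x / P s x - 2⁻¹ * (P1 s x^2 * P2 s x / P s x^2)))
        = (∫ x, P1 s x * P3 s x / P s x) - ∫ x, 2⁻¹ * (P1 s x^2 * P2 s x / P s x^2) :=
      integral_sub (I_T2 hs) ((I_T3 hs).const_mul 2⁻¹)
    have h2 : (∫ x, 2⁻¹ * (P1 s x^2 * P2 s x / P s x^2))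
        = 2⁻¹ * ∫ x, P1 s x^2 * P2 s x / P s x^2 := integral_const_mul _ _
    rw [h1, h2]
  have hcont : Continuous (fun x => (P2 s x - P1 s x^2/P s x)^2 / P s x) :=
    (((continuous_P2_x hs).sub (((continuous_P1_x hs).pow 2).div (continuous_P_x hs)
      (fun x => ne_of_gt (P_pos hs x)))).pow 2).div (continuous_P_x hs)
      (fun x => ne_of_gt (P_pos hs x))
  have hRid : (fun x => (P2 s x - P1 s x^2/P s x)^2 / P s x)
      = fun x => P2 s x^2/P s x - 2*(P1 s x^2 * P2 s x/P s x^2) + P1 s x^4/P s x^3 := by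
    funext x
    have hP := ne_of_gt (P_pos hs x)
    field_simp
    ring
  have hsub : Integrable (fun x => P2 s x^2/P s x - 2*(P1 s x^2 * P2 s x/P s x^2)) :=
    (I_T1 hs).sub ((I_T3 hs).const_mul 2)
  have hRint : Integrable (fun x => (P2 s x - P1 s x^2/P s x)^2/P s x) := by
    rw [hRid]
    exact hsub.add (I_T4 hs)
  have hRsplit : (∫ x, (P2 s x - P1 s x^2/P s x)^2/P s x)
      = (∫ x, P2 s x^2/P s x) - 2*(∫ x, P1 s x^2 * P2 s x/P s x^2)
        + ∫ x, P1 s x^4/P s x^3 := by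
    rw [hRid]
    have e1 : (∫ x, (P2 s x^2/P s x - 2*(P1 s x^2 * P2 s x/P s x^2)) + P1 s x^4/P s x^3)
        = (∫ x, P2 s x^2/P s x - 2*(P1 s x^2 * P2 s x/P s x^2)) + ∫ x, P1 s x^4/P s x^3 :=
      integral_add hsub (I_T4 hs)
    have e2 : (∫ x, P2 s x^2/P s x - 2*(P1 s x^2 * P2 s x/P s x^2))
        = (∫ x, P2 s x^2/P s x) - ∫ x, 2*(P1 s x^2 * P2 s x/P s x^2) :=
      integral_sub (I_T1 hs) ((I_T3 hs).const_mul 2)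
    have e3 : (∫ x, 2*(P1 s x^2 * P2 s x/P s x^2))
        = 2 * ∫ x, P1 s x^2 * P2 s x/P s x^2 := integral_const_mul _ _
    rw [e1, e2, e3]
  have hRpos : 0 < ∫ x, (P2 s x - P1 s x^2/P s x)^2/P s x := by
    have hnn : ∀ x, (0:ℝ) ≤ (P2 s x - P1 s x^2/P s x)^2/P s x :=
      fun x => div_nonneg (sq_nonneg _) (P_pos hs x).le
    rcases lt_or_eq_of_le (integral_nonneg (f := fun x => (P2 s x - P1 s x^2/P s x)^2/P s x) hnn) with h|h
    · exact h
    · exfalso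
      have hae := (integral_eq_zero_iff_of_nonneg hnn hRint).1 h.symm
      have hfn := (Continuous.ae_eq_iff_eq (volume : Measure ℝ) hcont continuous_const).1 hae
      have h0 := congrFun hfn 0
      have hP0 := P_pos hs 0
      have hP1 : P1 s 0 = 0 := P1_zero hs
      have hP2 : P2 s 0 < 0 := P2_zero_neg hs
      rw [hP1] at h0
      have hnum : (0:ℝ) < P2 s 0 ^ 2 := by
        have := mul_pos_of_neg_of_neg hP2 hP2
        nlinarith
      have hpos : (0:ℝ) < (P2 s 0 - 0^2/P s 0)^2/P s 0 := by
        have hz : P2 s 0 - 0^2/P s 0 = P2 s 0 := by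
          norm_num
        rw [hz]
        exact div_pos hnum hP0
      rw [h0] at hpos
      exact lt_irrefl 0 hpos
  have hib1 := ibp1 hs
  have hib2 := ibp2 hs
  linarith [hsplit, hRsplit, hRpos]

/-! ### Assembly: strict concavity of `-ent` on `(0,∞)` -/

noncomputable def rho (s : ℝ) : ℝ := -ent s

lemma hasDerivAt_rho {s : ℝ} (hs : 0 < s) : HasDerivAt rho (2⁻¹ * fisher s) s := by
  have h := (hasDerivAt_ent hs).neg
  have hval : -(∫ x, 2⁻¹ * (P2 s x * (Real.log (P s x) + 1))) = 2⁻¹ * fisher s := by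
    rw [integral_const_mul, ibp0 hs]
    ring
  rw [hval] at h
  exact h

lemma strictConcaveOn_rho : StrictConcaveOn ℝ (Set.Ioi (0:ℝ)) rho := by
  apply strictConcaveOn_of_deriv2_neg (convex_Ioi 0)
  · intro s hs
    exact ((hasDerivAt_rho (mem_Ioi.1 hs)).continuousAt).continuousWithinAt
  · intro s hs
    rw [interior_Ioi] at hs
    have hs' : 0 < s := mem_Ioi.1 hs
    have hev : deriv rho =ᶠ[𝓝 s] fun t => 2⁻¹ * fisher t := by
      filter_upwards [Ioi_mem_nhds hs'] with t ht
      exact (hasDerivAt_rho (mem_Ioi.1 ht)).deriv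
    have h2 : deriv^[2] rho s = deriv (deriv rho) s := by
      rw [show (2:ℕ) = 1 + 1 from rfl, Function.iterate_add_apply]
      simp
    rw [h2, hev.deriv_eq]
    have hJ := (hasDerivAt_fisher hs').const_mul (2⁻¹ : ℝ)
    rw [hJ.deriv]
    have := fisher_deriv_neg hs'
    nlinarith

/-! ### Bridge to the statement's definitions -/

lemma density_eq {s : ℝ} (hs : 0 < s) (x : ℝ) : ditherGaussDensity s x = P s x := by
  rw [ditherGaussDensity]
  have hg : ∀ u : ℝ, gaussianPDFReal 0 (Real.toNNReal s) (x - u) = g s (x - u) := by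
    intro u
    rw [gaussianPDFReal, g, Real.coe_toNNReal s hs.le, sub_zero, neg_div]
  simp_rw [hg]
  rw [MeasureTheory.integral_Icc_eq_integral_Ioc,
      ← intervalIntegral.integral_of_le (by norm_num : -(1/2:ℝ) ≤ 1/2),
      intervalIntegral.integral_comp_sub_left (fun v => g s v) x,
      P_eq_integral hs]
  norm_num

lemma entropy_eq {s : ℝ} (hs : 0 < s) : ditherGaussEntropy s = rho s := by
  rw [ditherGaussEntropy, rho, ent]
  simp only [density_eq hs]

end Dither

/-- `ρ(s) = h(√s·Z + ε)` is strictly concave on `(0, ∞)`. -/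
theorem stmt_16 : StrictConcaveOn ℝ (Set.Ioi (0 : ℝ)) ditherGaussEntropy := by
  obtain ⟨hconv, hlt⟩ := Dither.strictConcaveOn_rho
  refine ⟨convex_Ioi 0, ?_⟩
  intro x hx y hy hxy a b ha hb hab
  have hm : a • x + b • y ∈ Set.Ioi (0:ℝ) := hconv hx hy ha.le hb.le hab
  rw [Dither.entropy_eq (mem_Ioi.1 hx), Dither.entropy_eq (mem_Ioi.1 hy),
      Dither.entropy_eq (mem_Ioi.1 hm)]
  exact hlt hx hy hxy ha hb hab
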